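/- Let q be an odd prime power, m a positive integer, and ζ ∈ F_{q^{2m}} with ζ^{q^m − 1} = −1. Define Ψ: F_{q^{2m}} × F_{q^{2m}} → F_{q^m}³ by Ψ(x_0ζ + x_1, y_0ζ + y_1) = (x_1 y_1, x_0 y_0, x_0 y_1 + x_1 y_0) for x_0,x_1,y_0,y_1 ∈ F_{q^m}. Then the image of Ψ equals {(A,B,C) ∈ F_{q^m}³ : C² − 4AB is a square in F_{q^m}}, and Ψ(x,y) = (0,0,0) if and only if x = 0 or y = 0. -/

import Mathlib

/-- **Lemma Ψ.** With `ζ^{q^m-1} = -1`, the image of the map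
`Ψ(x₀ζ+x₁, y₀ζ+y₁) = (x₁y₁, x₀y₀, x₀y₁+x₁y₀)` is exactly the set of
triples `(A,B,C)` with `C² - 4AB` a square in `F_{q^m}`, and `Ψ(x,y) = 0`
iff `x = 0` or `y = 0`. -/
theorem Psi_image_and_zeros (q m : ℕ) (hq : Odd q) (hq' : IsPrimePow q) (hm : 0 < m)
    (Fm E : Type) [Field Fm] [Fintype Fm] [Field E]
    [Algebra Fm E]
    (hcard : Fintype.card Fm = q ^ m)
    (hdim : Module.finrank Fm E = 2)
    (ζ : E) (hζ : ζ ^ (q ^ m - 1) = -1) :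
    (∀ A B C : Fm,
      (∃ x0 x1 y0 y1 : Fm,
        x1 * y1 = A ∧ x0 * y0 = B ∧ x0 * y1 + x1 * y0 = C) ↔
      IsSquare (C ^ 2 - 4 * A * B)) ∧
    (∀ x0 x1 y0 y1 : Fm,
      (x1 * y1 = 0 ∧ x0 * y0 = 0 ∧ x0 * y1 + x1 * y0 = 0) ↔
      (algebraMap Fm E x0 * ζ + algebraMap Fm E x1 = 0 ∨
        algebraMap Fm E y0 * ζ + algebraMap Fm E y1 = 0)) := by
  -- characteristic facts
  have hqodd : Odd (q ^ m) := hq.pow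
  have hcardodd : Odd (Fintype.card Fm) := hcard ▸ hqodd
  have h2 : (2 : Fm) ≠ 0 := by
    intro h
    have hchar : ringChar Fm ∣ 2 := ringChar.dvd (by exact_mod_cast h)
    have hp : (ringChar Fm).Prime := CharP.char_is_prime Fm (ringChar Fm)
    have : ringChar Fm = 2 := (Nat.prime_dvd_prime_iff_eq hp Nat.prime_two).mp hchar
    obtain ⟨n, hn, hcard2⟩ := FiniteField.card Fm (ringChar Fm)
    rw [this] at hcard2
    have : Even (Fintype.card Fm) := by
      rw [hcard2]
      exact (Nat.even_pow' (by exact_mod_cast n.pos.ne')).mpr even_two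
    exact (Nat.not_even_iff_odd.mpr hcardodd) this
  have h2E : (2 : E) ≠ 0 := by
    intro h
    exact h2 ((algebraMap Fm E).injective
      (show algebraMap Fm E 2 = algebraMap Fm E 0 by rw [map_ofNat, map_zero]; exact_mod_cast h))
  -- the key independence lemma
  have key : ∀ a b : Fm, algebraMap Fm E a * ζ + algebraMap Fm E b = 0 → a = 0 ∧ b = 0 := by
    intro a b hab
    by_cases ha : a = 0
    · refine ⟨ha, ?_⟩
      rw [ha, map_zero, zero_mul, zero_add] at hab
      exact (map_eq_zero _).mp hab
    · exfalso
      have hζeq : ζ = algebraMap Fm E (-(b / a)) := by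
        have haE : algebraMap Fm E a ≠ 0 := by simpa using ha
        rw [map_neg, map_div₀]
        field_simp
        linear_combination hab
      set c : Fm := -(b / a) with hc
      have hpow : (algebraMap Fm E c) ^ (q ^ m - 1) = -1 := by rw [← hζeq]; exact hζ
      by_cases hc0 : c = 0
      · rw [hc0, map_zero, zero_pow] at hpow
        · exact one_ne_zero (neg_eq_zero.mp hpow.symm)
        · have : 2 ≤ q := hq'.two_le
          have : 2 ≤ q ^ m := le_trans this (Nat.le_self_pow hm.ne' q)
          omega
      · have : c ^ (Fintype.card Fm - 1) = 1 := FiniteField.pow_card_sub_one_eq_one c hc0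
        rw [hcard] at this
        rw [← map_pow, this, map_one] at hpow
        apply h2E
        linear_combination hpow
  constructor
  · intro A B C
    constructor
    · rintro ⟨x0, x1, y0, y1, hA, hB, hC⟩
      refine ⟨x0 * y1 - x1 * y0, ?_⟩
      subst hA hB hC; ring
    · rintro ⟨d, hd⟩
      by_cases hA : A ≠ 0
      · refine ⟨(C + d) / (2 * A), 1, (C - d) / 2, A, by ring, ?_, ?_⟩
        · rw [div_mul_div_comm, div_eq_iff (mul_ne_zero (mul_ne_zero h2 hA) h2)]
          linear_combination hd
        · field_simp
          ring
      · push_neg at hA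
        subst hA
        by_cases hB : B ≠ 0
        · exact ⟨1, C / B, B, 0, by ring, by ring, by field_simp; ring⟩
        · push_neg at hB
          subst hB
          exact ⟨1, 0, 0, C, by ring, by ring, by ring⟩
  · intro x0 x1 y0 y1
    constructor
    · rintro ⟨h1, h2, h3⟩
      by_cases hx0 : x0 = 0
      · by_cases hx1 : x1 = 0
        · left; rw [hx0, hx1, map_zero, zero_mul, zero_add]
        · right
          have hy1 : y1 = 0 := by
            rcases mul_eq_zero.mp h1 with h | h
            · exact absurd h hx1
            · exact h
          have hy0 : y0 = 0 := by
            rw [hx0, zero_mul, zero_add] at h3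
            rcases mul_eq_zero.mp h3 with h | h
            · exact absurd h hx1
            · exact h
          rw [hy0, hy1, map_zero, zero_mul, zero_add]
      · right
        have hy0 : y0 = 0 := by
          rcases mul_eq_zero.mp h2 with h | h
          · exact absurd h hx0
          · exact h
        have hy1 : y1 = 0 := by
          rw [hy0, mul_zero, add_zero] at h3
          rcases mul_eq_zero.mp h3 with h | h
          · exact absurd h hx0
          · exact h
        rw [hy0, hy1, map_zero, zero_mul, zero_add]
    · rintro (h | h)
      · obtain ⟨hx0, hx1⟩ := key _ _ h
        subst hx0 hx1
        exact ⟨by ring, by ring, by ring⟩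
      · obtain ⟨hy0, hy1⟩ := key _ _ h
        subst hy0 hy1
        exact ⟨by ring, by ring, by ring⟩
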